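/- Let Γ ∈ Π_{N,m} be a refined path of boxes of [0,1]², with crossing-interval centers (x_1,y_1),…,(x_{2N−2},y_{2N−2}), and set (x_0,y_0)=(0,0), (x_{2N−1},y_{2N−1})=(1,1). Let ξ be a finite counting measure supported in [0,1]² with no point on any line {x = i/N} or {y = j/N}, i,j ∈ ℤ. Then ℓ(ξ) ≥ Σ_{k=1}^{2N−1} ℓ(ξ↾[x_{k−1},x_k]×[y_{k−1},y_k]). -/

import Mathlib

open MeasureTheory
open scoped ENNReal

/-- A refined path of boxes `Γ ∈ Π_{N,m}`: a staircase sequence of boxes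
`R_N(i_k,j_k)`, `k = 1,…,2N-1`, from `(1,1)` to `(N,N)`, together with choices
`r_k ∈ {1,…,m}` of subintervals of the common edges, monotone along straight runs. -/
structure RefinedPath (N m : ℕ) where
  i : ℕ → ℕ
  j : ℕ → ℕ
  r : ℕ → ℕ
  start_i : i 1 = 1
  start_j : j 1 = 1
  stop_i : i (2 * N - 1) = N
  stop_j : j (2 * N - 1) = N
  step : ∀ k, 1 ≤ k → k ≤ 2 * N - 2 →
    (i (k + 1) = i k + 1 ∧ j (k + 1) = j k) ∨ (i (k + 1) = i k ∧ j (k + 1) = j k + 1)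
  r_mem : ∀ k, 1 ≤ k → k ≤ 2 * N - 2 → 1 ≤ r k ∧ r k ≤ m
  r_mono : ∀ k, 1 ≤ k → k ≤ 2 * N - 3 →
    ((i k = i (k + 1) ∧ i (k + 1) = i (k + 2)) ∨ (j k = j (k + 1) ∧ j (k + 1) = j (k + 2))) →
    r k ≤ r (k + 1)

/-- Center of the `k`-th crossing interval of a refined path. -/
noncomputable def RefinedPath.center {N m : ℕ} (Γ : RefinedPath N m) (k : ℕ) : ℝ × ℝ :=
  if Γ.i (k + 1) = Γ.i k + 1 then
    ((Γ.i k : ℝ) / N, ((Γ.j k : ℝ) - 1) / N + ((Γ.r k : ℝ) - 1 / 2) / (m * N))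
  else
    (((Γ.i k : ℝ) - 1) / N + ((Γ.r k : ℝ) - 1 / 2) / (m * N), (Γ.j k : ℝ) / N)

/-- The centers, extended by the corners `(0,0)` at `k = 0` and `(1,1)` at `k = 2N-1`. -/
noncomputable def RefinedPath.pt {N m : ℕ} (Γ : RefinedPath N m) (k : ℕ) : ℝ × ℝ :=
  if k = 0 then (0, 0) else if k = 2 * N - 1 then (1, 1) else Γ.center k

/-- Record length of a counting measure `ξ` on `ℝ²`. -/
noncomputable def recLenM (ξ : Measure (ℝ × ℝ)) : ℕ :=
  sSup {k : ℕ | ∃ z : Fin k → ℝ × ℝ,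
    (k : ℝ≥0∞) ≤ ξ (Set.range z) ∧
    ∀ i j : Fin k, 0 ≤ ((z i).1 - (z j).1) * ((z i).2 - (z j).2)}

namespace RecAux


def recSet (ξ : Measure (ℝ × ℝ)) : Set ℕ :=
  {k : ℕ | ∃ z : Fin k → ℝ × ℝ,
    (k : ℝ≥0∞) ≤ ξ (Set.range z) ∧
    ∀ i j : Fin k, 0 ≤ ((z i).1 - (z j).1) * ((z i).2 - (z j).2)}

lemma recLenM_eq (ξ : Measure (ℝ × ℝ)) : recLenM ξ = sSup (recSet ξ) := rfl

lemma recSet_nonempty (ξ : Measure (ℝ × ℝ)) : (recSet ξ).Nonempty :=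
  ⟨0, ⟨fun i => i.elim0, by simp, fun i => i.elim0⟩⟩

lemma recSet_bdd (ξ : Measure (ℝ × ℝ)) (hfin : ξ Set.univ ≠ ∞) : BddAbove (recSet ξ) := by
  obtain ⟨n, hn⟩ := ENNReal.exists_nat_gt hfin
  refine ⟨n, fun k hk => ?_⟩
  obtain ⟨w, hw, -⟩ := hk
  have h2 : (k : ℝ≥0∞) < n :=
    lt_of_le_of_lt (hw.trans (measure_mono (Set.subset_univ _))) hn
  exact_mod_cast h2.le
  
lemma recLenM_witness (ξ : Measure (ℝ × ℝ)) (hfin : ξ Set.univ ≠ ∞) :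
    ∃ w : Fin (recLenM ξ) → ℝ × ℝ,
      ((recLenM ξ : ℝ≥0∞)) ≤ ξ (Set.range w) ∧
      ∀ i j, 0 ≤ ((w i).1 - (w j).1) * ((w i).2 - (w j).2) :=
  Nat.sSup_mem (recSet_nonempty ξ) (recSet_bdd ξ hfin)

lemma le_recLenM (ξ : Measure (ℝ × ℝ)) (hfin : ξ Set.univ ≠ ∞) {k : ℕ}
    (hk : k ∈ recSet ξ) : k ≤ recLenM ξ :=
  le_csSup (recSet_bdd ξ hfin) hk

lemma comp_of_le {x y : ℝ × ℝ} (h : x ≤ y) : 0 ≤ (x.1 - y.1) * (x.2 - y.2) := by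
  nlinarith [mul_nonneg (sub_nonneg.mpr h.1) (sub_nonneg.mpr h.2)]

lemma comp_comparable {x y : ℝ × ℝ} (h : x ≤ y ∨ y ≤ x) :
    0 ≤ (x.1 - y.1) * (x.2 - y.2) := by
  rcases h with h | h
  · exact comp_of_le h
  · have := comp_of_le h
    nlinarith

lemma restrict_fin (ξ : Measure (ℝ × ℝ)) (hfin : ξ Set.univ ≠ ∞) (S : Set (ℝ × ℝ)) :
    ξ.restrict S Set.univ ≠ ∞ := by
  rw [Measure.restrict_apply_univ]
  exact fun h => hfin (top_le_iff.mp (h ▸ measure_mono (Set.subset_univ S)))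

lemma recLenM_restrict_le (ξ : Measure (ℝ × ℝ)) (hfin : ξ Set.univ ≠ ∞) (S : Set (ℝ × ℝ)) :
    recLenM (ξ.restrict S) ≤ recLenM ξ := by
  rw [recLenM_eq, recLenM_eq]
  refine csSup_le_csSup (recSet_bdd ξ hfin) (recSet_nonempty _) ?_
  rintro k ⟨w, hw, hc⟩
  exact ⟨w, hw.trans ((Measure.le_iff'.mp Measure.restrict_le_self) _), hc⟩

lemma concat_mem (ξ : Measure (ℝ × ℝ)) (a b c : ℝ × ℝ)
    (hab : a ≤ b) (hbc : b ≤ c) (hb : ξ {b} = 0)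
    (k₁ k₂ : ℕ) (z₁ : Fin k₁ → ℝ × ℝ) (z₂ : Fin k₂ → ℝ × ℝ)
    (hz₁m : (k₁ : ℝ≥0∞) ≤ (ξ.restrict (Set.Icc a b)) (Set.range z₁))
    (hz₁c : ∀ i j, 0 ≤ ((z₁ i).1 - (z₁ j).1) * ((z₁ i).2 - (z₁ j).2))
    (hz₂m : (k₂ : ℝ≥0∞) ≤ (ξ.restrict (Set.Icc b c)) (Set.range z₂))
    (hz₂c : ∀ i j, 0 ≤ ((z₂ i).1 - (z₂ j).1) * ((z₂ i).2 - (z₂ j).2)) :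
    k₁ + k₂ ∈ recSet (ξ.restrict (Set.Icc a c)) := by
  set w₁ : Fin k₁ → ℝ × ℝ := fun i => if z₁ i ∈ Set.Icc a b then z₁ i else b with hw₁
  set w₂ : Fin k₂ → ℝ × ℝ := fun i => if z₂ i ∈ Set.Icc b c then z₂ i else b with hw₂
  have hw₁le : ∀ i, w₁ i ≤ b := by
    intro i; rw [hw₁]; dsimp only; split
    · next h => exact h.2
    · exact le_refl b
  have hw₂ge : ∀ i, b ≤ w₂ i := by
    intro i; rw [hw₂]; dsimp only; split
    · next h => exact h.1
    · exact le_refl b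
  set w : Fin k₁ ⊕ Fin k₂ → ℝ × ℝ := Sum.elim w₁ w₂ with hwdef
  set v : Fin (k₁ + k₂) → ℝ × ℝ := w ∘ finSumFinEquiv.symm with hv
  have hrange : Set.range v = Set.range w₁ ∪ Set.range w₂ := by
    rw [hv, Set.range_comp, Equiv.range_eq_univ, Set.image_univ, hwdef, Set.Sum.elim_range]
  set S₁ : Set (ℝ × ℝ) := (Set.range z₁ ∩ Set.Icc a b) \ {b} with hS₁d
  set S₂ : Set (ℝ × ℝ) := (Set.range z₂ ∩ Set.Icc b c) \ {b} with hS₂d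
  have hS₂meas : MeasurableSet S₂ :=
    (((Set.finite_range z₂).inter_of_left _).diff).measurableSet
  have hS₁ : (k₁ : ℝ≥0∞) ≤ ξ S₁ := by
    rw [hS₁d, measure_diff_null hb,
      ← Measure.restrict_apply (Set.finite_range z₁).measurableSet]
    exact hz₁m
  have hS₂ : (k₂ : ℝ≥0∞) ≤ ξ S₂ := by
    rw [hS₂d, measure_diff_null hb,
      ← Measure.restrict_apply (Set.finite_range z₂).measurableSet]
    exact hz₂m
  have hdisj : Disjoint S₁ S₂ := by
    rw [Set.disjoint_left]
    rintro x ⟨⟨-, hx1⟩, hxb⟩ ⟨⟨-, hx2⟩, -⟩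
    exact hxb (le_antisymm hx1.2 hx2.1)
  have hsub : S₁ ∪ S₂ ⊆ Set.range v ∩ Set.Icc a c := by
    rw [hrange]
    rintro x (⟨⟨⟨i, rfl⟩, hx⟩, -⟩ | ⟨⟨⟨i, rfl⟩, hx⟩, -⟩)
    · refine ⟨Or.inl ⟨i, ?_⟩, Set.Icc_subset_Icc le_rfl hbc hx⟩
      rw [hw₁]; dsimp only; rw [if_pos hx]
    · refine ⟨Or.inr ⟨i, ?_⟩, Set.Icc_subset_Icc hab le_rfl hx⟩
      rw [hw₂]; dsimp only; rw [if_pos hx]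
  have hmes : ((k₁ + k₂ : ℕ) : ℝ≥0∞) ≤ (ξ.restrict (Set.Icc a c)) (Set.range v) := by
    rw [Measure.restrict_apply ((Set.finite_range v).measurableSet)]
    calc ((k₁ + k₂ : ℕ) : ℝ≥0∞) = (k₁ : ℝ≥0∞) + k₂ := by push_cast; ring
    _ ≤ ξ S₁ + ξ S₂ := add_le_add hS₁ hS₂
    _ = ξ (S₁ ∪ S₂) := (measure_union hdisj hS₂meas).symm
    _ ≤ ξ (Set.range v ∩ Set.Icc a c) := measure_mono hsub
  have hcompw : ∀ s t : Fin k₁ ⊕ Fin k₂, 0 ≤ ((w s).1 - (w t).1) * ((w s).2 - (w t).2) := by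
    rintro (i | i) (j | j)
    · rw [hwdef]; dsimp only [Sum.elim_inl]
      rw [hw₁]; dsimp only
      split
      · next h1 =>
        split
        · next h2 => exact hz₁c i j
        · exact comp_of_le h1.2
      · split
        · next h2 => exact comp_comparable (Or.inr h2.2)
        · simp
    · exact comp_of_le ((hw₁le i).trans (hw₂ge j))
    · exact comp_comparable (Or.inr ((hw₁le j).trans (hw₂ge i)))
    · rw [hwdef]; dsimp only [Sum.elim_inr]
      rw [hw₂]; dsimp only
      split
      · next h1 =>
        split
        · next h2 => exact hz₂c i j
        · exact comp_comparable (Or.inr h1.1)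
      · split
        · next h2 => exact comp_of_le h2.1
        · simp
  exact ⟨v, hmes, fun i j => hcompw _ _⟩

lemma recLen_concat (ξ : Measure (ℝ × ℝ)) (hfin : ξ Set.univ ≠ ∞) (a b c : ℝ × ℝ)
    (hab : a ≤ b) (hbc : b ≤ c) (hb : ξ {b} = 0) :
    recLenM (ξ.restrict (Set.Icc a b)) + recLenM (ξ.restrict (Set.Icc b c))
      ≤ recLenM (ξ.restrict (Set.Icc a c)) := by
  obtain ⟨z₁, hz₁m, hz₁c⟩ := recLenM_witness (ξ.restrict (Set.Icc a b)) (restrict_fin ξ hfin _)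
  obtain ⟨z₂, hz₂m, hz₂c⟩ := recLenM_witness (ξ.restrict (Set.Icc b c)) (restrict_fin ξ hfin _)
  exact le_recLenM _ (restrict_fin ξ hfin _)
    (concat_mem ξ a b c hab hbc hb _ _ z₁ z₂ hz₁m hz₁c hz₂m hz₂c)

lemma chain (ξ : Measure (ℝ × ℝ)) (hfin : ξ Set.univ ≠ ∞) (p : ℕ → ℝ × ℝ)
    (hp : Monotone p) (hnull : ∀ k, ξ {p k} = 0) :
    ∀ K : ℕ, ∑ k ∈ Finset.Icc 1 K, recLenM (ξ.restrict (Set.Icc (p (k-1)) (p k)))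
      ≤ recLenM (ξ.restrict (Set.Icc (p 0) (p K)))
  | 0 => by simp
  | (K+1) => by
    rw [Finset.sum_Icc_succ_top (Nat.le_add_left 1 K)]
    calc (∑ k ∈ Finset.Icc 1 K, recLenM (ξ.restrict (Set.Icc (p (k-1)) (p k))))
          + recLenM (ξ.restrict (Set.Icc (p (K+1-1)) (p (K+1))))
        ≤ recLenM (ξ.restrict (Set.Icc (p 0) (p K)))
          + recLenM (ξ.restrict (Set.Icc (p K) (p (K+1)))) := by
          exact add_le_add_left (chain ξ hfin p hp hnull K) _
      _ ≤ recLenM (ξ.restrict (Set.Icc (p 0) (p (K+1)))) :=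
          recLen_concat ξ hfin (p 0) (p K) (p (K+1)) (hp (Nat.zero_le K))
            (hp (Nat.le_succ K)) (hnull K)




variable {N m : ℕ} (Γ : RefinedPath N m)

lemma center_eval_h {k : ℕ} (h : Γ.i (k+1) = Γ.i k + 1) :
    Γ.center k = ((Γ.i k : ℝ) / N,
      ((Γ.j k : ℝ) - 1) / N + ((Γ.r k : ℝ) - 1 / 2) / (m * N)) := by
  rw [RefinedPath.center, if_pos h]

lemma center_eval_v {k : ℕ} (h : Γ.i (k+1) = Γ.i k) :
    Γ.center k = (((Γ.i k : ℝ) - 1) / N + ((Γ.r k : ℝ) - 1 / 2) / (m * N),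
      (Γ.j k : ℝ) / N) := by
  rw [RefinedPath.center, if_neg (by omega)]

lemma pt_eval_mid {k : ℕ} (hN : 1 ≤ N) (h1 : 1 ≤ k) (h2 : k ≤ 2*N - 2) :
    Γ.pt k = Γ.center k := by
  rw [RefinedPath.pt, if_neg (by omega), if_neg (by omega)]

lemma delta_pos {k : ℕ} (hN : 1 ≤ N) (hm : 1 ≤ m) (hr : 1 ≤ Γ.r k) :
    0 < ((Γ.r k : ℝ) - 1 / 2) / (m * N) := by
  have h1 : (1:ℝ) ≤ Γ.r k := by exact_mod_cast hr
  have h2 : (0:ℝ) < (m:ℝ) * N := by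
    have : (1:ℝ) ≤ m := by exact_mod_cast hm
    have : (1:ℝ) ≤ N := by exact_mod_cast hN
    nlinarith
  exact div_pos (by linarith) h2

lemma delta_lt {k : ℕ} (hN : 1 ≤ N) (hm : 1 ≤ m) (hr : Γ.r k ≤ m) :
    ((Γ.r k : ℝ) - 1 / 2) / (m * N) < 1 / N := by
  have h1 : (Γ.r k : ℝ) ≤ m := by exact_mod_cast hr
  have hmR : (1:ℝ) ≤ m := by exact_mod_cast hm
  have hNR : (1:ℝ) ≤ N := by exact_mod_cast hN
  rw [div_lt_div_iff₀ (by nlinarith) (by linarith)]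
  nlinarith


/-- monotonicity of the extended centers -/
lemma pt_mono (hN : 1 ≤ N) (k : ℕ) (hk : k ≤ 2*N - 2) :
    Γ.pt k ≤ Γ.pt (k+1) := by
  have hNR : (1:ℝ) ≤ N := by exact_mod_cast hN
  have hNpos : (0:ℝ) < N := by linarith
  have hdiv : ∀ a b : ℝ, a ≤ b → a / N ≤ b / N := fun a b h => by gcongr
  rcases Nat.eq_zero_or_pos k with rfl | hk1
  · -- k = 0
    by_cases hN1 : N = 1
    · subst hN1
      have h0 : Γ.pt 0 = (0,0) := by rw [RefinedPath.pt, if_pos rfl]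
      have h1 : Γ.pt 1 = (1,1) := by rw [RefinedPath.pt]; norm_num
      rw [h0, h1]
      exact Prod.mk_le_mk.mpr ⟨by norm_num, by norm_num⟩
    · have hN2 : 2 ≤ N := by omega
      have hm : 1 ≤ m := le_trans (Γ.r_mem 1 le_rfl (by omega)).1 (Γ.r_mem 1 le_rfl (by omega)).2
      have hr1 : 1 ≤ Γ.r 1 := (Γ.r_mem 1 le_rfl (by omega)).1
      have h0 : Γ.pt 0 = (0,0) := by rw [RefinedPath.pt, if_pos rfl]
      have h1 : Γ.pt 1 = Γ.center 1 := pt_eval_mid Γ hN le_rfl (by omega)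
      rw [h0, h1]
      have hδ := delta_pos Γ hN hm hr1
      by_cases hs : Γ.i 2 = Γ.i 1 + 1
      · rw [center_eval_h Γ hs, Γ.start_i, Γ.start_j]
        refine Prod.mk_le_mk.mpr ⟨by positivity, ?_⟩
        simp only [Nat.cast_one, sub_self, zero_div, zero_add]
        exact le_of_lt hδ
      · have hs' : Γ.i 2 = Γ.i 1 := by
          rcases Γ.step 1 le_rfl (by omega) with h | h
          · exact absurd h.1 hs
          · exact h.1
        rw [center_eval_v Γ hs', Γ.start_i, Γ.start_j]
        refine Prod.mk_le_mk.mpr ⟨?_, by positivity⟩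
        simp only [Nat.cast_one, sub_self, zero_div, zero_add]
        exact le_of_lt hδ
  · -- 1 ≤ k ≤ 2N-2
    have hN2 : 2 ≤ N := by omega
    have hm : 1 ≤ m := le_trans (Γ.r_mem k hk1 hk).1 (Γ.r_mem k hk1 hk).2
    have hrk := Γ.r_mem k hk1 hk
    have hδk1 := delta_pos Γ hN hm hrk.1
    have hδk2 := delta_lt Γ hN hm hrk.2
    have hstepk := Γ.step k hk1 hk
    have hpk : Γ.pt k = Γ.center k := pt_eval_mid Γ hN hk1 hk
    have hδmono : Γ.r k ≤ Γ.r (k+1) →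
        ((Γ.r k : ℝ) - 1 / 2) / (m * N) ≤ ((Γ.r (k+1) : ℝ) - 1 / 2) / (m * N) := by
      intro h
      have h' : ((Γ.r k : ℝ)) ≤ (Γ.r (k+1) : ℝ) := by exact_mod_cast h
      gcongr
    rcases Nat.lt_or_ge k (2*N - 2) with hklt | hkeq
    · -- interior: k+1 ≤ 2N-2 as well
      have hk1le : k + 1 ≤ 2*N - 2 := by omega
      have hpk1 : Γ.pt (k+1) = Γ.center (k+1) := pt_eval_mid Γ hN (by omega) hk1le
      have hrk1 := Γ.r_mem (k+1) (by omega) hk1le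
      have hδk11 := delta_pos Γ hN hm hrk1.1
      have hδk12 := delta_lt Γ hN hm hrk1.2
      have hstepk1 := Γ.step (k+1) (by omega) hk1le
      rw [hpk, hpk1]
      rcases hstepk with hkh | hkv
      · rcases hstepk1 with hk1h | hk1v
        · -- horizontal, horizontal
          have hrmono := hδmono (Γ.r_mono k hk1 (by omega) (Or.inr ⟨hkh.2.symm, hk1h.2.symm⟩))
          rw [center_eval_h Γ hkh.1, center_eval_h Γ hk1h.1]
          refine Prod.mk_le_mk.mpr ⟨?_, ?_⟩
          · rw [hkh.1]; push_cast
            exact hdiv _ _ (by linarith)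
          · rw [hkh.2]
            linarith
        · -- horizontal then vertical
          rw [center_eval_h Γ hkh.1, center_eval_v Γ hk1v.1]
          refine Prod.mk_le_mk.mpr ⟨?_, ?_⟩
          · rw [hkh.1]
            push_cast
            have he : ((Γ.i k : ℝ) + 1 - 1) = (Γ.i k : ℝ) := by ring
            rw [he]
            linarith
          · rw [hkh.2]
            have he : ((Γ.j k : ℝ) - 1) / N + 1 / N = (Γ.j k : ℝ) / N := by
              rw [← add_div]; norm_num
            linarith
      · rcases hstepk1 with hk1h | hk1v
        · -- vertical then horizontal
          rw [center_eval_v Γ hkv.1, center_eval_h Γ hk1h.1]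
          refine Prod.mk_le_mk.mpr ⟨?_, ?_⟩
          · rw [hkv.1]
            have he : ((Γ.i k : ℝ) - 1) / N + 1 / N = (Γ.i k : ℝ) / N := by
              rw [← add_div]; norm_num
            linarith
          · rw [hkv.2]
            push_cast
            have he : ((Γ.j k : ℝ) + 1 - 1) = (Γ.j k : ℝ) := by ring
            rw [he]
            linarith
        · -- vertical, vertical
          have hrmono := hδmono (Γ.r_mono k hk1 (by omega) (Or.inl ⟨hkv.1.symm, hk1v.1.symm⟩))
          rw [center_eval_v Γ hkv.1, center_eval_v Γ hk1v.1]
          refine Prod.mk_le_mk.mpr ⟨?_, ?_⟩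
          · rw [hkv.1]
            linarith
          · rw [hkv.2]; push_cast
            exact hdiv _ _ (by linarith)
    · -- k = 2N-2, so k+1 = 2N-1
      have hke : k = 2*N - 2 := by omega
      have hke1 : k + 1 = 2*N - 1 := by omega
      have hpk1 : Γ.pt (k+1) = (1,1) := by
        rw [RefinedPath.pt, if_neg (by omega), if_pos hke1]
      have hiN : Γ.i (k+1) = N := by rw [hke1, Γ.stop_i]
      have hjN : Γ.j (k+1) = N := by rw [hke1, Γ.stop_j]
      rw [hpk, hpk1]
      have hrm : ((Γ.r k : ℝ) - 1 / 2) / (m * N) < 1 / N := hδk2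
      rcases hstepk with hkh | hkv
      · -- horizontal last step: i k + 1 = N, j k = N
        have hik : (Γ.i k : ℝ) = (N : ℝ) - 1 := by
          have : Γ.i k + 1 = N := by rw [← hkh.1, hiN]
          have := congrArg (Nat.cast : ℕ → ℝ) this
          push_cast at this; linarith
        have hjk : (Γ.j k : ℝ) = (N : ℝ) := by
          have : Γ.j k = N := by rw [← hkh.2, hjN]
          exact_mod_cast this
        rw [center_eval_h Γ hkh.1, hik, hjk]
        refine Prod.mk_le_mk.mpr ⟨?_, ?_⟩
        · rw [div_le_one hNpos]; linarith
        · have he : ((N : ℝ) - 1) / N + 1 / N = 1 := by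
            rw [← add_div]; field_simp; ring
          linarith
      · -- vertical last step: i k = N, j k + 1 = N
        have hik : (Γ.i k : ℝ) = (N : ℝ) := by
          have : Γ.i k = N := by rw [← hkv.1, hiN]
          exact_mod_cast this
        have hjk : (Γ.j k : ℝ) = (N : ℝ) - 1 := by
          have : Γ.j k + 1 = N := by rw [← hkv.2, hjN]
          have := congrArg (Nat.cast : ℕ → ℝ) this
          push_cast at this; linarith
        rw [center_eval_v Γ hkv.1, hik, hjk]
        refine Prod.mk_le_mk.mpr ⟨?_, ?_⟩
        · have he : ((N : ℝ) - 1) / N + 1 / N = 1 := by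
            rw [← add_div]; field_simp; ring
          linarith
        · rw [div_le_one hNpos]; linarith

/-- every extended center has a grid coordinate -/
lemma pt_grid (hN : 1 ≤ N) (k : ℕ) :
    ∃ t : ℤ, (Γ.pt k).1 = (t : ℝ) / N ∨ (Γ.pt k).2 = (t : ℝ) / N := by
  rcases eq_or_ne k 0 with rfl | h0
  · refine ⟨0, Or.inl ?_⟩
    rw [RefinedPath.pt, if_pos rfl]
    simp
  rcases eq_or_ne k (2*N - 1) with rfl | h1
  · refine ⟨(N : ℤ), Or.inl ?_⟩
    rw [RefinedPath.pt, if_neg (by omega), if_pos rfl]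
    have : ((N : ℤ) : ℝ) = (N : ℝ) := by push_cast; ring
    rw [this, div_self (by positivity : (N:ℝ) ≠ 0)]
  · rw [RefinedPath.pt, if_neg h0, if_neg h1, RefinedPath.center]
    split
    · exact ⟨(Γ.i k : ℤ), Or.inl (by push_cast; ring)⟩
    · exact ⟨(Γ.j k : ℤ), Or.inr (by push_cast; ring)⟩


end RecAux

/-- Lower bound for the record length along a refined path of boxes: the record length of
`ξ` is at least the sum over the path of the record lengths of the restrictions of `ξ` to the
rectangles spanned by consecutive crossing-interval centers. -/
theorem recLen_ge_path_sum (N m : ℕ) (Γ : RefinedPath N m)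
    (M : ℕ) (z : Fin M → ℝ × ℝ)
    (hsupp : ∀ a : Fin M, z a ∈ Set.Icc ((0 : ℝ), (0 : ℝ)) (1, 1))
    (hgrid : ∀ a : Fin M, ∀ t : ℤ, (z a).1 ≠ (t : ℝ) / N ∧ (z a).2 ≠ (t : ℝ) / N) :
    ∑ k ∈ Finset.Icc 1 (2 * N - 1),
        recLenM ((∑ a : Fin M, Measure.dirac (z a)).restrict
          (Set.Icc (Γ.pt (k - 1)) (Γ.pt k)))
      ≤ recLenM (∑ a : Fin M, Measure.dirac (z a)) := by
  classical
  set ξ := (∑ a : Fin M, Measure.dirac (z a)) with hξ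
  rcases Nat.eq_zero_or_pos N with rfl | hN
  · simp
  have hfin : ξ Set.univ ≠ ∞ := by
    rw [hξ, MeasureTheory.Measure.finset_sum_apply]
    simp
  set q : ℕ → ℝ × ℝ := fun k => Γ.pt (min k (2*N - 1)) with hq
  have hmono : Monotone q := by
    apply monotone_nat_of_le_succ
    intro k
    rcases Nat.lt_or_ge k (2*N - 1) with h | h
    · have h1 : min k (2*N-1) = k := min_eq_left (by omega)
      have h2 : min (k+1) (2*N-1) = k + 1 := min_eq_left (by omega)
      rw [hq]; dsimp only; rw [h1, h2]
      exact RecAux.pt_mono Γ hN k (by omega)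
    · have h1 : min k (2*N-1) = 2*N-1 := min_eq_right h
      have h2 : min (k+1) (2*N-1) = 2*N-1 := min_eq_right (by omega)
      rw [hq]; dsimp only; rw [h1, h2]
  have hnull : ∀ k, ξ {q k} = 0 := by
    intro k
    obtain ⟨t, ht⟩ := RecAux.pt_grid Γ hN (min k (2*N - 1))
    have hne : ∀ a : Fin M, z a ≠ q k := by
      intro a hza
      rcases ht with ht | ht
      · exact (hgrid a t).1 (by rw [hza]; exact ht)
      · exact (hgrid a t).2 (by rw [hza]; exact ht)
    rw [hξ, MeasureTheory.Measure.finset_sum_apply]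
    refine Finset.sum_eq_zero fun a _ => ?_
    rw [Measure.dirac_apply' _ (measurableSet_singleton _)]
    exact Set.indicator_of_notMem (by simpa using hne a) 1
  have hsum : ∑ k ∈ Finset.Icc 1 (2 * N - 1),
      recLenM (ξ.restrict (Set.Icc (Γ.pt (k - 1)) (Γ.pt k)))
      = ∑ k ∈ Finset.Icc 1 (2 * N - 1),
      recLenM (ξ.restrict (Set.Icc (q (k - 1)) (q k))) := by
    refine Finset.sum_congr rfl fun k hk => ?_
    rw [Finset.mem_Icc] at hk
    rw [hq]; dsimp only
    rw [min_eq_left (by omega), min_eq_left (by omega)]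
  rw [hsum]
  calc ∑ k ∈ Finset.Icc 1 (2 * N - 1), recLenM (ξ.restrict (Set.Icc (q (k - 1)) (q k)))
      ≤ recLenM (ξ.restrict (Set.Icc (q 0) (q (2*N-1)))) :=
        RecAux.chain ξ hfin q hmono hnull (2*N-1)
    _ ≤ recLenM ξ := RecAux.recLenM_restrict_le ξ hfin _
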